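/- Suppose v₁ ≥ v₂ ≥ ⋯ ≥ v_L > 0 and 2 ≤ k ≤ L. Then for every partition 𝓕 of [L] into k nonempty parts, v₁ + ⋯ + v_{k−1} + (Σ_{i=k}^L v_i²)/(Σ_{i=k}^L v_i) ≥ Σ_{F∈𝓕} ‖v_F‖₂² / ‖v_F‖₁; that is, the partition placing each of the k−1 largest weights in its own singleton part and the remaining indices in a single part maximizes Σ_{F∈𝓕} ‖v_F‖₂²/‖v_F‖₁ over all k-partitions of [L]. -/

import Mathlib

open Finset

private lemma merge_alg (a sR QR sX QX : ℝ) (ha : 0 < a) (hsR : 0 ≤ sR) (hsX : 0 < sX)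
    (hQR : 0 ≤ QR) (hQX : 0 ≤ QX) (hQRa : QR ≤ a * sR) (hQXa : QX ≤ a * sX)
    (hQX2 : QX ≤ sX ^ 2) :
    (a ^ 2 + QR) / (a + sR) + QX / sX ≤ a + (QR + QX) / (sR + sX) := by
  have h1 : 0 < a + sR := by linarith
  have h3 : 0 < sR + sX := by linarith
  rw [div_add_div _ _ h1.ne' hsX.ne', div_le_iff₀ (by positivity),
    show (a + (QR + QX) / (sR + sX)) * ((a + sR) * sX)
      = a * ((a + sR) * sX) + (QR + QX) * ((a + sR) * sX) / (sR + sX) from by ring,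
    ← sub_le_iff_le_add', le_div_iff₀ h3]
  rcases le_total a sX with hc | hc
  · nlinarith [mul_nonneg (mul_nonneg hsR (sub_nonneg.2 hQXa)) (le_of_lt h1),
      mul_nonneg (mul_nonneg hsR hsR) (sub_nonneg.2 hQXa),
      mul_nonneg (mul_nonneg (sub_nonneg.2 hQRa) hsX.le) (sub_nonneg.2 hc)]
  · nlinarith [mul_nonneg (mul_nonneg hsX.le (sub_nonneg.2 hc)) (add_nonneg hQR (mul_nonneg hsR hsR)),
      mul_nonneg (mul_nonneg hsR hsR) (sub_nonneg.2 hQX2),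
      mul_nonneg (mul_nonneg ha.le hsR) (sub_nonneg.2 hQX2)]

private lemma gen_partition {L : ℕ} (v : Fin L → ℝ) (hpos : ∀ i, 0 < v i)
    (hmono : ∀ i j : Fin L, i ≤ j → v j ≤ v i) :
    ∀ (k : ℕ), 1 ≤ k → ∀ (c : ℕ), c + k ≤ L →
    ∀ (P : Finset (Finset (Fin L))), P.card = k →
    (∀ F ∈ P, F.Nonempty) →
    (∀ F ∈ P, ∀ G ∈ P, F ≠ G → Disjoint F G) →
    (P.biUnion id = univ.filter (fun i : Fin L => c ≤ (i : ℕ))) →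
    (∑ F ∈ P, (∑ i ∈ F, v i ^ 2) / (∑ i ∈ F, v i))
      ≤ (∑ i ∈ univ.filter (fun i : Fin L => c ≤ (i:ℕ) ∧ (i:ℕ) < c + (k-1)), v i)
        + (∑ i ∈ univ.filter (fun i : Fin L => c + (k-1) ≤ (i:ℕ)), v i ^ 2)
          / (∑ i ∈ univ.filter (fun i : Fin L => c + (k-1) ≤ (i:ℕ)), v i) := by
  intro k
  induction k with
  | zero => intro h; omega
  | succ m ih =>
    intro _ c hcL P hcard hne hdisj hU
    rcases Nat.eq_zero_or_pos m with hm | hm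
    · -- base case k = 1
      subst hm
      obtain ⟨F, rfl⟩ := Finset.card_eq_one.mp hcard
      have hF : F = univ.filter (fun i : Fin L => c ≤ (i : ℕ)) := by
        simpa using hU
      have hmid : univ.filter (fun i : Fin L => c ≤ (i:ℕ) ∧ (i:ℕ) < c + (1-1)) = ∅ := by
        apply Finset.eq_empty_of_forall_notMem
        intro i hi
        simp only [Finset.mem_filter] at hi
        omega
      have htail : univ.filter (fun i : Fin L => c + (1-1) ≤ (i:ℕ))
          = univ.filter (fun i : Fin L => c ≤ (i : ℕ)) := by
        apply Finset.filter_congr; intro i _; simp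
      rw [hmid, htail, Finset.sum_empty, Finset.sum_singleton, hF, zero_add]
    · -- inductive step, k = m + 1, m ≥ 1
      have hcltL : c < L := by omega
      set ic : Fin L := ⟨c, hcltL⟩ with hic_def
      have hicmem : ic ∈ P.biUnion id := by
        rw [hU]; simp [hic_def]
      obtain ⟨G, hG, hicG⟩ := Finset.mem_biUnion.mp hicmem
      have hicG' : ic ∈ G := hicG
      have herase_ne : (P.erase G).Nonempty := by
        rw [← Finset.card_pos, Finset.card_erase_of_mem hG, hcard]; omega
      obtain ⟨X, hXe⟩ := herase_ne
      have hXP : X ∈ P := Finset.mem_of_mem_erase hXe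
      have hXG : X ≠ G := Finset.ne_of_mem_erase hXe
      have hGX : Disjoint X G := hdisj X hXP G hG hXG
      set R : Finset (Fin L) := G.erase ic with hR_def
      have hicR : ic ∉ R := Finset.notMem_erase _ _
      have hGins : insert ic R = G := Finset.insert_erase hicG'
      -- all parts are within the upper set
      have hsubU : ∀ F ∈ P, ∀ i ∈ F, c ≤ (i : ℕ) := by
        intro F hF i hi
        have : i ∈ P.biUnion id := Finset.mem_biUnion.mpr ⟨F, hF, hi⟩
        rw [hU] at this
        exact (Finset.mem_filter.mp this).2
      have hvle : ∀ F ∈ P, ∀ i ∈ F, v i ≤ v ic := by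
        intro F hF i hi
        exact hmono ic i (by
          have := hsubU F hF i hi
          exact Fin.mk_le_of_le_val this)
      -- the new partition
      set rest : Finset (Finset (Fin L)) := (P.erase G).erase X with hrest_def
      have hrest_sub : rest ⊆ P := fun F hF =>
        Finset.mem_of_mem_erase (Finset.mem_of_mem_erase hF)
      have hXne : X.Nonempty := hne X hXP
      have hRXnotmem : R ∪ X ∉ rest := by
        intro hmem
        have hFP : R ∪ X ∈ P := hrest_sub hmem
        have hFneX : R ∪ X ≠ X := Finset.ne_of_mem_erase hmem
        have hd : Disjoint (R ∪ X) X := hdisj _ hFP X hXP hFneX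
        obtain ⟨x, hx⟩ := hXne
        exact Finset.disjoint_left.mp hd (Finset.mem_union_right _ hx) hx
      set P' : Finset (Finset (Fin L)) := insert (R ∪ X) rest with hP'_def
      have hcard' : P'.card = m := by
        rw [hP'_def, Finset.card_insert_of_notMem hRXnotmem, hrest_def,
          Finset.card_erase_of_mem hXe, Finset.card_erase_of_mem hG, hcard]
        omega
      have hne' : ∀ F ∈ P', F.Nonempty := by
        intro F hF
        rcases Finset.mem_insert.mp hF with rfl | hF
        · exact hXne.mono Finset.subset_union_right
        · exact hne F (hrest_sub hF)
      have hdisjRX : ∀ F ∈ rest, Disjoint F (R ∪ X) := by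
        intro F hF
        have hFP : F ∈ P := hrest_sub hF
        have hFG : F ≠ G := Finset.ne_of_mem_erase (Finset.mem_of_mem_erase hF)
        have hFX : F ≠ X := Finset.ne_of_mem_erase hF
        refine Finset.disjoint_union_right.mpr ⟨?_, hdisj F hFP X hXP hFX⟩
        exact (hdisj F hFP G hG hFG).mono_right (Finset.erase_subset _ _)
      have hdisj' : ∀ F ∈ P', ∀ F' ∈ P', F ≠ F' → Disjoint F F' := by
        intro F hF F' hF' hne12
        rcases Finset.mem_insert.mp hF with rfl | hF
        · rcases Finset.mem_insert.mp hF' with rfl | hF'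
          · exact absurd rfl hne12
          · exact (hdisjRX F' hF').symm
        · rcases Finset.mem_insert.mp hF' with rfl | hF'
          · exact hdisjRX F hF
          · exact hdisj F (hrest_sub hF) F' (hrest_sub hF') hne12
      have hU' : P'.biUnion id = univ.filter (fun i : Fin L => c + 1 ≤ (i : ℕ)) := by
        ext i
        simp only [Finset.mem_biUnion, Finset.mem_filter, Finset.mem_univ, true_and, id]
        constructor
        · rintro ⟨F, hF, hiF⟩
          rcases Finset.mem_insert.mp hF with rfl | hF
          · rcases Finset.mem_union.mp hiF with hiR | hiX
            · have h1 : c ≤ (i : ℕ) := hsubU G hG i (Finset.mem_of_mem_erase hiR)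
              have h2 : i ≠ ic := Finset.ne_of_mem_erase hiR
              have : (i : ℕ) ≠ c := fun h => h2 (Fin.ext h)
              omega
            · have h1 : c ≤ (i : ℕ) := hsubU X hXP i hiX
              have h2 : i ≠ ic := by
                intro h; subst h
                exact Finset.disjoint_left.mp hGX hiX hicG'
              have : (i : ℕ) ≠ c := fun h => h2 (Fin.ext h)
              omega
          · have h1 : c ≤ (i : ℕ) := hsubU F (hrest_sub hF) i hiF
            have hFG : F ≠ G := Finset.ne_of_mem_erase (Finset.mem_of_mem_erase hF)
            have h2 : i ≠ ic := by
              intro h; subst h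
              exact Finset.disjoint_left.mp (hdisj F (hrest_sub hF) G hG hFG) hiF hicG'
            have : (i : ℕ) ≠ c := fun h => h2 (Fin.ext h)
            omega
        · intro hi
          have : i ∈ P.biUnion id := by
            rw [hU]; simp only [Finset.mem_filter, Finset.mem_univ, true_and]; omega
          obtain ⟨F, hF, hiF⟩ := Finset.mem_biUnion.mp this
          have hine : i ≠ ic := by
            intro h; subst h; simp [hic_def] at hi
          by_cases hFG : F = G
          · subst hFG
            exact ⟨R ∪ X, Finset.mem_insert_self _ _,
              Finset.mem_union_left _ (Finset.mem_erase.mpr ⟨hine, hiF⟩)⟩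
          · by_cases hFX : F = X
            · exact ⟨R ∪ X, Finset.mem_insert_self _ _,
                Finset.mem_union_right _ (hFX ▸ hiF)⟩
            · exact ⟨F, Finset.mem_insert_of_mem
                (Finset.mem_erase.mpr ⟨hFX, Finset.mem_erase.mpr ⟨hFG, hF⟩⟩), hiF⟩
      -- merge inequality
      have hRX : Disjoint R X := hGX.symm.mono_left (Finset.erase_subset _ _)
      have hmerge : (∑ i ∈ G, v i ^ 2) / (∑ i ∈ G, v i) + (∑ i ∈ X, v i ^ 2) / (∑ i ∈ X, v i)
          ≤ v ic + (∑ i ∈ R ∪ X, v i ^ 2) / (∑ i ∈ R ∪ X, v i) := by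
        have hsumG : ∑ i ∈ G, v i = v ic + ∑ i ∈ R, v i := by
          rw [← hGins, Finset.sum_insert hicR]
        have hsumG2 : ∑ i ∈ G, v i ^ 2 = v ic ^ 2 + ∑ i ∈ R, v i ^ 2 := by
          rw [← hGins, Finset.sum_insert hicR]
        have hsumRX : ∑ i ∈ R ∪ X, v i = (∑ i ∈ R, v i) + ∑ i ∈ X, v i :=
          Finset.sum_union hRX
        have hsumRX2 : ∑ i ∈ R ∪ X, v i ^ 2 = (∑ i ∈ R, v i ^ 2) + ∑ i ∈ X, v i ^ 2 :=
          Finset.sum_union hRX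
        rw [hsumG, hsumG2, hsumRX, hsumRX2]
        have hsX : 0 < ∑ i ∈ X, v i := Finset.sum_pos (fun i _ => hpos i) hXne
        apply merge_alg _ _ _ _ _ (hpos ic)
          (Finset.sum_nonneg fun i _ => (hpos i).le) hsX
          (Finset.sum_nonneg fun i _ => sq_nonneg _)
          (Finset.sum_nonneg fun i _ => sq_nonneg _)
        · rw [Finset.mul_sum]
          apply Finset.sum_le_sum
          intro i hi
          have := hvle G hG i (Finset.mem_of_mem_erase hi)
          nlinarith [hpos i]
        · rw [Finset.mul_sum]
          apply Finset.sum_le_sum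
          intro i hi
          have := hvle X hXP i hi
          nlinarith [hpos i]
        · rw [sq, Finset.mul_sum]
          apply Finset.sum_le_sum
          intro i hi
          have h1 : v i ≤ ∑ j ∈ X, v j := Finset.single_le_sum (fun j _ => (hpos j).le) hi
          nlinarith [hpos i]
      -- sum decomposition
      have hsplit : (∑ F ∈ P, (∑ i ∈ F, v i ^ 2) / (∑ i ∈ F, v i))
          = (∑ i ∈ G, v i ^ 2) / (∑ i ∈ G, v i) + (∑ i ∈ X, v i ^ 2) / (∑ i ∈ X, v i)
            + ∑ F ∈ rest, (∑ i ∈ F, v i ^ 2) / (∑ i ∈ F, v i) := by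
        rw [← Finset.add_sum_erase _ _ hG, ← Finset.add_sum_erase _ _ hXe, hrest_def]
        ring
      have hsplit' : (∑ F ∈ P', (∑ i ∈ F, v i ^ 2) / (∑ i ∈ F, v i))
          = (∑ i ∈ R ∪ X, v i ^ 2) / (∑ i ∈ R ∪ X, v i)
            + ∑ F ∈ rest, (∑ i ∈ F, v i ^ 2) / (∑ i ∈ F, v i) :=
        Finset.sum_insert hRXnotmem
      have hIH := ih hm (c + 1) (by omega) P' hcard' hne' hdisj' hU'
      have hmm : c + 1 + (m - 1) = c + m := by omega
      rw [hmm] at hIH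
      have hmid : univ.filter (fun i : Fin L => c ≤ (i:ℕ) ∧ (i:ℕ) < c + (m + 1 - 1))
          = insert ic (univ.filter (fun i : Fin L => c + 1 ≤ (i:ℕ) ∧ (i:ℕ) < c + m)) := by
        ext i
        simp only [Finset.mem_filter, Finset.mem_univ, true_and, Finset.mem_insert]
        constructor
        · intro ⟨h1, h2⟩
          rcases Nat.eq_or_lt_of_le h1 with h | h
          · left; exact Fin.ext h.symm
          · right; omega
        · rintro (rfl | ⟨h1, h2⟩)
          · simp only [hic_def]; omega
          · omega
      have hicnotmid : ic ∉ univ.filter (fun i : Fin L => c + 1 ≤ (i:ℕ) ∧ (i:ℕ) < c + m) := by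
        simp [hic_def]
      rw [hsplit, hmid, Finset.sum_insert hicnotmid]
      have : c + (m + 1 - 1) = c + m := by omega
      rw [this]
      calc (∑ i ∈ G, v i ^ 2) / (∑ i ∈ G, v i) + (∑ i ∈ X, v i ^ 2) / (∑ i ∈ X, v i)
            + ∑ F ∈ rest, (∑ i ∈ F, v i ^ 2) / (∑ i ∈ F, v i)
          ≤ v ic + (∑ i ∈ R ∪ X, v i ^ 2) / (∑ i ∈ R ∪ X, v i)
            + ∑ F ∈ rest, (∑ i ∈ F, v i ^ 2) / (∑ i ∈ F, v i) := by linarith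
        _ = v ic + ∑ F ∈ P', (∑ i ∈ F, v i ^ 2) / (∑ i ∈ F, v i) := by rw [hsplit']; ring
        _ ≤ v ic + ((∑ i ∈ univ.filter (fun i : Fin L => c + 1 ≤ (i:ℕ) ∧ (i:ℕ) < c + m), v i)
              + (∑ i ∈ univ.filter (fun i : Fin L => c + m ≤ (i:ℕ)), v i ^ 2)
                / (∑ i ∈ univ.filter (fun i : Fin L => c + m ≤ (i:ℕ)), v i)) := by linarith
        _ = _ := by ring

/-- for positive weights `v₁ ≥ v₂ ≥ ⋯ ≥ v_L > 0` and `2 ≤ k ≤ L`, every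
partition `𝓕` of `[L]` into `k` nonempty parts (encoded by a surjection `π : [L] → [k]`)
satisfies `∑_{F∈𝓕} ‖v_F‖₂²/‖v_F‖₁ ≤ v₁ + ⋯ + v_{k−1} + (∑_{i≥k} v_i²)/(∑_{i≥k} v_i)`;
i.e. the partition isolating each of the `k−1` largest weights maximizes the sum. -/
theorem statement15 (L k : ℕ) (hk : 2 ≤ k) (hkL : k ≤ L) (v : Fin L → ℝ)
    (hpos : ∀ i, 0 < v i) (hmono : ∀ i j : Fin L, i ≤ j → v j ≤ v i)
    (π : Fin L → Fin k) (hπ : Function.Surjective π) :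
    (∑ j : Fin k, (∑ i ∈ univ.filter (fun i => π i = j), (v i) ^ 2) /
        (∑ i ∈ univ.filter (fun i => π i = j), v i))
      ≤ (∑ i ∈ univ.filter (fun i : Fin L => (i : ℕ) < k - 1), v i) +
        (∑ i ∈ univ.filter (fun i : Fin L => k - 1 ≤ (i : ℕ)), (v i) ^ 2) /
        (∑ i ∈ univ.filter (fun i : Fin L => k - 1 ≤ (i : ℕ)), v i) := by

  set part : Fin k → Finset (Fin L) := fun j => univ.filter (fun i => π i = j) with hpart
  have hinj : Function.Injective part := by
    intro j1 j2 h
    obtain ⟨i, hi⟩ := hπ j1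
    have h1 : i ∈ part j1 := by simp [hpart, hi]
    rw [h] at h1
    have := (Finset.mem_filter.mp h1).2
    rw [← hi]
    exact this
  set P : Finset (Finset (Fin L)) := Finset.image part univ with hP
  have hsum : (∑ j : Fin k, (∑ i ∈ part j, (v i) ^ 2) / (∑ i ∈ part j, v i))
      = ∑ F ∈ P, (∑ i ∈ F, v i ^ 2) / (∑ i ∈ F, v i) := by
    rw [hP, Finset.sum_image (fun a _ b _ h => hinj h)]
  have hcard : P.card = k := by
    rw [hP, Finset.card_image_of_injective _ hinj, Finset.card_univ, Fintype.card_fin]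
  have hne : ∀ F ∈ P, F.Nonempty := by
    intro F hF
    obtain ⟨j, _, rfl⟩ := Finset.mem_image.mp hF
    obtain ⟨i, hi⟩ := hπ j
    exact ⟨i, by simp [hpart, hi]⟩
  have hdisj : ∀ F ∈ P, ∀ G ∈ P, F ≠ G → Disjoint F G := by
    intro F hF G hG hFG
    obtain ⟨j1, _, rfl⟩ := Finset.mem_image.mp hF
    obtain ⟨j2, _, rfl⟩ := Finset.mem_image.mp hG
    rw [Finset.disjoint_left]
    intro i hi1 hi2
    simp only [hpart, Finset.mem_filter] at hi1 hi2
    exact hFG (by rw [← hi1.2, ← hi2.2])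
  have hU : P.biUnion id = univ.filter (fun i : Fin L => 0 ≤ (i : ℕ)) := by
    ext i
    simp only [Finset.mem_biUnion, Finset.mem_filter, Finset.mem_univ, true_and, id]
    constructor
    · intro _; omega
    · intro _
      exact ⟨part (π i), Finset.mem_image_of_mem _ (Finset.mem_univ _), by simp [hpart]⟩
  have h := gen_partition v hpos hmono k (by omega) 0 (by omega) P hcard hne hdisj hU
  rw [← hsum] at h
  have e1 : univ.filter (fun i : Fin L => 0 ≤ (i:ℕ) ∧ (i:ℕ) < 0 + (k-1))
      = univ.filter (fun i : Fin L => (i : ℕ) < k - 1) := by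
    apply Finset.filter_congr; intro i _; simp
  have e2 : univ.filter (fun i : Fin L => 0 + (k-1) ≤ (i:ℕ))
      = univ.filter (fun i : Fin L => k - 1 ≤ (i : ℕ)) := by
    apply Finset.filter_congr; intro i _; simp
  rw [e1, e2] at h
  exact h
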